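/- The induced metric on the cylinder S(u,v) = (a cos v, a sin v, u) from the Cartan-Vranceanu metric ds²_{ℓ,m} is flat with constant coefficients: ds² = du² − (ℓa²/(1+ma²)) du dv + (a²/(1+ma²)² + ℓ²a⁴/(4(1+ma²)²)) dv², hence the cylinder has Gaussian curvature zero. -/

import Mathlib

open Real

/-- Partial derivative in the `i`-th coordinate direction on `ℝ²`. -/
noncomputable def pd2 (i : Fin 2) (f : (Fin 2 → ℝ) → ℝ) (p : Fin 2 → ℝ) : ℝ :=
  fderiv ℝ f p (Pi.single i 1)

/-- `D = 1 + m (x² + y²)`. -/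
noncomputable def Dcv (m : ℝ) (p : Fin 3 → ℝ) : ℝ := 1 + m * (p 0 ^ 2 + p 1 ^ 2)

/-- The Cartan–Vranceanu metric `ds²_{ℓ,m}` as a matrix of coefficients. -/
noncomputable def gCV (l m : ℝ) (p : Fin 3 → ℝ) : Matrix (Fin 3) (Fin 3) ℝ :=
  !![1 / Dcv m p ^ 2 + (l * p 1 / (2 * Dcv m p)) ^ 2,
     -(l ^ 2 * p 0 * p 1) / (4 * Dcv m p ^ 2),
     l * p 1 / (2 * Dcv m p);
     -(l ^ 2 * p 0 * p 1) / (4 * Dcv m p ^ 2),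
     1 / Dcv m p ^ 2 + (l * p 0 / (2 * Dcv m p)) ^ 2,
     -(l * p 0) / (2 * Dcv m p);
     l * p 1 / (2 * Dcv m p),
     -(l * p 0) / (2 * Dcv m p),
     1]

/-- The cylinder `S(u,v) = (a cos v, a sin v, u)` as a map `ℝ² → ℝ³`,
with `p = (u, v)`. -/
noncomputable def Scyl (a : ℝ) (p : Fin 2 → ℝ) : Fin 3 → ℝ :=
  ![a * Real.cos (p 1), a * Real.sin (p 1), p 0]

/-- The metric induced on the cylinder: the pullback of `gCV` along `Scyl`. -/
noncomputable def gCyl (l m a : ℝ) (p : Fin 2 → ℝ) : Matrix (Fin 2) (Fin 2) ℝ :=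
  Matrix.of fun i j =>
    ∑ α : Fin 3, ∑ β : Fin 3,
      gCV l m (Scyl a p) α β * pd2 i (fun q => Scyl a q α) p * pd2 j (fun q => Scyl a q β) p

/-- Christoffel symbols of a 2-dimensional metric `G` given in coordinates. -/
noncomputable def christoffel2 (G : (Fin 2 → ℝ) → Matrix (Fin 2) (Fin 2) ℝ)
    (k i j : Fin 2) (p : Fin 2 → ℝ) : ℝ :=
  (1 / 2) * ∑ r : Fin 2, (G p)⁻¹ k r *
    (pd2 i (fun q => G q r j) p + pd2 j (fun q => G q r i) p
      - pd2 r (fun q => G q i j) p)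

/-- The lowered curvature component `R_{0101} = Σ_k G_{0k} R^k_{101}` of a
2-dimensional metric `G`. -/
noncomputable def riem2 (G : (Fin 2 → ℝ) → Matrix (Fin 2) (Fin 2) ℝ)
    (p : Fin 2 → ℝ) : ℝ :=
  ∑ k : Fin 2, G p 0 k *
    (pd2 0 (fun q => christoffel2 G k 1 1 q) p - pd2 1 (fun q => christoffel2 G k 0 1 q) p
      + ∑ s : Fin 2, (christoffel2 G k 0 s p * christoffel2 G s 1 1 p
          - christoffel2 G k 1 s p * christoffel2 G s 0 1 p))

/-- The Gaussian curvature `K = R_{0101} / det G` of a 2-dimensional metric `G`. -/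
noncomputable def gauss2 (G : (Fin 2 → ℝ) → Matrix (Fin 2) (Fin 2) ℝ)
    (p : Fin 2 → ℝ) : ℝ :=
  riem2 G p / (G p).det

lemma hproj (j : Fin 2) (p : Fin 2 → ℝ) :
    HasFDerivAt (fun q : Fin 2 → ℝ => q j)
      (ContinuousLinearMap.proj j : (Fin 2 → ℝ) →L[ℝ] ℝ) p :=
  hasFDerivAt_apply (𝕜 := ℝ) j p

lemma pd2_coord (i j : Fin 2) (p : Fin 2 → ℝ) :
    pd2 i (fun q => q j) p = (Pi.single i 1 : Fin 2 → ℝ) j := by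
  rw [pd2, (hproj j p).fderiv]; rfl

lemma pd2_cos (a : ℝ) (i : Fin 2) (p : Fin 2 → ℝ) :
    pd2 i (fun q => a * Real.cos (q 1)) p
      = a * (-Real.sin (p 1)) * (Pi.single i 1 : Fin 2 → ℝ) 1 := by
  have h := ((hproj 1 p).cos).const_mul a
  rw [pd2, h.fderiv]; simp [mul_assoc]

lemma pd2_sin (a : ℝ) (i : Fin 2) (p : Fin 2 → ℝ) :
    pd2 i (fun q => a * Real.sin (q 1)) p
      = a * (Real.cos (p 1)) * (Pi.single i 1 : Fin 2 → ℝ) 1 := by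
  have h := ((hproj 1 p).sin).const_mul a
  rw [pd2, h.fderiv]; simp [mul_assoc]

lemma Scyl0 (a : ℝ) (p : Fin 2 → ℝ) : Scyl a p 0 = a * Real.cos (p 1) := rfl
lemma Scyl1 (a : ℝ) (p : Fin 2 → ℝ) : Scyl a p 1 = a * Real.sin (p 1) := rfl
lemma Scyl2 (a : ℝ) (p : Fin 2 → ℝ) : Scyl a p 2 = p 0 := rfl

/-- The metric induced on the cylinder `S(u,v) = (a cos v, a sin v, u)` from the
Cartan–Vranceanu metric is flat with constant coefficients:
`ds² = du² − (ℓa²/(1+ma²)) du dv + (a²/(1+ma²)² + ℓ²a⁴/(4(1+ma²)²)) dv²`,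
hence the cylinder has Gaussian curvature zero. -/
theorem stmt19 (l m a : ℝ) (ha : 0 < a) (hD : 0 < 1 + m * a ^ 2) :
    (∀ p : Fin 2 → ℝ,
      gCyl l m a p =
        !![1, -(l * a ^ 2) / (2 * (1 + m * a ^ 2));
           -(l * a ^ 2) / (2 * (1 + m * a ^ 2)),
           a ^ 2 / (1 + m * a ^ 2) ^ 2 + l ^ 2 * a ^ 4 / (4 * (1 + m * a ^ 2) ^ 2)]) ∧
    (∀ p : Fin 2 → ℝ, gauss2 (gCyl l m a) p = 0) := by
  have hD0 : (1 + m * a ^ 2) ≠ 0 := ne_of_gt hD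
  have hDcv : ∀ p : Fin 2 → ℝ, Dcv m (Scyl a p) = 1 + m * a ^ 2 := by
    intro p
    simp only [Dcv, Scyl0, Scyl1]
    linear_combination m * a ^ 2 * Real.sin_sq_add_cos_sq (p 1)
  have key : ∀ p : Fin 2 → ℝ,
      gCyl l m a p =
        !![1, -(l * a ^ 2) / (2 * (1 + m * a ^ 2));
           -(l * a ^ 2) / (2 * (1 + m * a ^ 2)),
           a ^ 2 / (1 + m * a ^ 2) ^ 2 + l ^ 2 * a ^ 4 / (4 * (1 + m * a ^ 2) ^ 2)] := by
    intro p
    have h := Real.sin_sq_add_cos_sq (p 1)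
    set s := Real.sin (p 1) with hs
    set c := Real.cos (p 1) with hc
    ext i j
    fin_cases i <;> fin_cases j
    · simp only [gCyl, Matrix.of_apply, Fin.sum_univ_three, Scyl0, Scyl1, Scyl2,
        pd2_cos, pd2_sin, pd2_coord, gCV, hDcv, Matrix.cons_val', Matrix.cons_val_zero,
        Matrix.cons_val_one, Matrix.head_cons, Matrix.cons_val_fin_one, Matrix.empty_val',
        Matrix.head_fin_const, Pi.single_eq_same, ne_eq, Pi.single_apply, Matrix.cons_val_two]
      norm_num
    · simp only [gCyl, Matrix.of_apply, Fin.sum_univ_three, Scyl0, Scyl1, Scyl2,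
        pd2_cos, pd2_sin, pd2_coord, gCV, hDcv, Matrix.cons_val', Matrix.cons_val_zero,
        Matrix.cons_val_one, Matrix.head_cons, Matrix.cons_val_fin_one, Matrix.empty_val',
        Matrix.head_fin_const, Pi.single_eq_same, ne_eq, Pi.single_apply, Matrix.cons_val_two]
      norm_num
      field_simp
      linear_combination (-l / (1 + a ^ 2 * m)) * h
    · simp only [gCyl, Matrix.of_apply, Fin.sum_univ_three, Scyl0, Scyl1, Scyl2,
        pd2_cos, pd2_sin, pd2_coord, gCV, hDcv, Matrix.cons_val', Matrix.cons_val_zero,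
        Matrix.cons_val_one, Matrix.head_cons, Matrix.cons_val_fin_one, Matrix.empty_val',
        Matrix.head_fin_const, Pi.single_eq_same, ne_eq, Pi.single_apply, Matrix.cons_val_two]
      norm_num
      field_simp
      linear_combination (-l / (1 + a ^ 2 * m)) * h
    · simp only [gCyl, Matrix.of_apply, Fin.sum_univ_three, Scyl0, Scyl1, Scyl2,
        pd2_cos, pd2_sin, pd2_coord, gCV, hDcv, Matrix.cons_val', Matrix.cons_val_zero,
        Matrix.cons_val_one, Matrix.head_cons, Matrix.cons_val_fin_one, Matrix.empty_val',
        Matrix.head_fin_const, Pi.single_eq_same, ne_eq, Pi.single_apply, Matrix.cons_val_two]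
      norm_num
      field_simp
      linear_combination ((16 : ℝ) + 4 * a ^ 2 * l ^ 2 * (s ^ 2 + c ^ 2 + 1)) * h
  refine ⟨key, ?_⟩
  intro p
  have hGconst : ∀ (r j' : Fin 2) (q' : Fin 2 → ℝ) (i' : Fin 2),
      pd2 i' (fun q => gCyl l m a q r j') q' = 0 := by
    intro r j' q' i'
    have heq : (fun q => gCyl l m a q r j')
        = fun _ : Fin 2 → ℝ =>
          (!![1, -(l * a ^ 2) / (2 * (1 + m * a ^ 2));
           -(l * a ^ 2) / (2 * (1 + m * a ^ 2)),
           a ^ 2 / (1 + m * a ^ 2) ^ 2 + l ^ 2 * a ^ 4 / (4 * (1 + m * a ^ 2) ^ 2)] :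
            Matrix (Fin 2) (Fin 2) ℝ) r j' :=
      funext fun q => by rw [key q]
    rw [heq]
    simp [pd2]
  have hchris : ∀ (k i j : Fin 2) (q : Fin 2 → ℝ),
      christoffel2 (gCyl l m a) k i j q = 0 := by
    intro k i j q
    simp [christoffel2, hGconst]
  have hchrisfun : ∀ (k i j : Fin 2),
      (fun q => christoffel2 (gCyl l m a) k i j q) = fun _ => (0 : ℝ) :=
    fun k i j => funext fun q => hchris k i j q
  have hriem : riem2 (gCyl l m a) p = 0 := by
    simp [riem2, hchris, hchrisfun, pd2]
  simp [gauss2, hriem]
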